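/- For μ_n = δ_{(−n,n)} and ν_n = δ_{(−n−1/ln n, n+1/ln n)} (n ≥ 2), the Figalli–Gigli distance satisfies FG_p(μ_n, ν_n) = √2/ln(n), hence FG_p(μ_n,ν_n) → 0 as n → ∞, while d((−n,n),Δ) = √2 n → ∞. -/
import Mathlib

/-- The Figalli–Gigli distance between the two Dirac masses
`μ_n = δ_{(−n,n)}` and `ν_n = δ_{(−n−1/ln n, n+1/ln n)}`:
`FG_p(δ_x,δ_y) = min(‖x−y‖^p, d(x,Δ)^p + d(y,Δ)^p)^{1/p}` with `d(z,Δ) = (z2−z1)/√2`. -/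
noncomputable def fgDiracs (p : ℝ) (n : ℕ) : ℝ :=
  (min ((Real.sqrt ((((-n : ℝ)) - (-(n : ℝ) - 1 / Real.log n)) ^ 2 +
          ((n : ℝ) - ((n : ℝ) + 1 / Real.log n)) ^ 2)) ^ p)
      ((((n : ℝ) - (-(n : ℝ))) / Real.sqrt 2) ^ p +
        ((((n : ℝ) + 1 / Real.log n) - (-(n : ℝ) - 1 / Real.log n)) / Real.sqrt 2) ^ p)) ^ (1 / p)

lemma key (p : ℝ) (hp : 1 ≤ p) (n : ℕ) (hn : 2 ≤ n) :
    fgDiracs p n = Real.sqrt 2 / Real.log n := by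
  have hp0 : (0:ℝ) < p := lt_of_lt_of_le one_pos hp
  have hn2 : (2:ℝ) ≤ (n:ℝ) := by exact_mod_cast hn
  have hL : 0 < Real.log n := Real.log_pos (by linarith)
  set L := Real.log n with hLdef
  have h1 : (((-n : ℝ)) - (-(n : ℝ) - 1 / L)) ^ 2 + ((n : ℝ) - ((n : ℝ) + 1 / L)) ^ 2
      = 2 * (1 / L) ^ 2 := by ring
  have hsqrt : Real.sqrt ((((-n : ℝ)) - (-(n : ℝ) - 1 / L)) ^ 2 +
      ((n : ℝ) - ((n : ℝ) + 1 / L)) ^ 2) = Real.sqrt 2 / L := by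
    have h2 : (Real.sqrt 2 / L) ^ 2 = 2 * (1 / L) ^ 2 := by
      rw [div_pow, Real.sq_sqrt (by norm_num : (0:ℝ) ≤ 2)]; ring
    rw [h1, ← h2]
    exact Real.sqrt_sq (by positivity)
  -- bound: √2/L ≤ first summand of the alternative cost
  have hlog2 : (1:ℝ)/2 < Real.log 2 := by
    have := Real.log_two_gt_d9; linarith
  have hL2 : Real.log 2 ≤ L := Real.log_le_log (by norm_num) hn2
  have hinvL : 1 / L ≤ 2 := by
    rw [div_le_iff₀ hL]; nlinarith
  have hs2 : (0:ℝ) < Real.sqrt 2 := by positivity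
  have hle : Real.sqrt 2 / L ≤ ((n : ℝ) - (-(n : ℝ))) / Real.sqrt 2 := by
    have : ((n : ℝ) - (-(n : ℝ))) / Real.sqrt 2 = Real.sqrt 2 * n := by
      rw [show ((n : ℝ) - (-(n : ℝ))) = 2 * n by ring, mul_comm,
        mul_div_assoc, Real.div_sqrt]
      ring
    rw [this, div_eq_mul_inv, mul_comm (Real.sqrt 2), mul_comm (Real.sqrt 2)]
    apply mul_le_mul_of_nonneg_right _ (le_of_lt hs2)
    rw [← one_div]; linarith
  have hmin : min ((Real.sqrt 2 / L) ^ p)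
      ((((n : ℝ) - (-(n : ℝ))) / Real.sqrt 2) ^ p +
        ((((n : ℝ) + 1 / L) - (-(n : ℝ) - 1 / L)) / Real.sqrt 2) ^ p)
      = (Real.sqrt 2 / L) ^ p := by
    apply min_eq_left
    have h2 : (0:ℝ) ≤ ((((n : ℝ) + 1 / L) - (-(n : ℝ) - 1 / L)) / Real.sqrt 2) ^ p := by
      apply Real.rpow_nonneg
      have h4 : (0:ℝ) < 1 / L := by positivity
      have h5 : (0:ℝ) ≤ (n:ℝ) := Nat.cast_nonneg n
      apply div_nonneg _ (le_of_lt hs2); linarith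
    have h3 : (Real.sqrt 2 / L) ^ p ≤ (((n : ℝ) - (-(n : ℝ))) / Real.sqrt 2) ^ p :=
      Real.rpow_le_rpow (by positivity) hle (le_of_lt hp0)
    linarith
  unfold fgDiracs
  rw [← hLdef, hsqrt, hmin, ← Real.rpow_mul (by positivity), mul_one_div,
    div_self (ne_of_gt hp0), Real.rpow_one]

/-- For `μ_n = δ_{(−n,n)}` and `ν_n = δ_{(−n−1/ln n, n+1/ln n)}` (`n ≥ 2`), one has
`FG_p(μ_n,ν_n) = √2/ln n`, hence `FG_p(μ_n,ν_n) → 0` as `n → ∞`, while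
`d((−n,n),Δ) = √2·n → ∞`. -/
theorem stmt13 (p : ℝ) (hp : 1 ≤ p) :
    (∀ n : ℕ, 2 ≤ n → fgDiracs p n = Real.sqrt 2 / Real.log n) ∧
    Filter.Tendsto (fun n : ℕ => fgDiracs p n) Filter.atTop (nhds 0) ∧
    Filter.Tendsto (fun n : ℕ => Real.sqrt 2 * (n : ℝ)) Filter.atTop Filter.atTop := by
  have hp0 : p ≠ 0 := by intro h; rw [h] at hp; linarith
  refine ⟨key p hp, ?_, ?_⟩
  · have hlog : Filter.Tendsto (fun n : ℕ => Real.log n) Filter.atTop Filter.atTop :=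
      Real.tendsto_log_atTop.comp tendsto_natCast_atTop_atTop
    have h0 : Filter.Tendsto (fun n : ℕ => Real.sqrt 2 / Real.log n) Filter.atTop (nhds 0) :=
      Filter.Tendsto.div_atTop tendsto_const_nhds hlog
    apply h0.congr' 
    filter_upwards [Filter.eventually_atTop.2 ⟨2, fun n hn => key p hp n hn⟩] with n h
    exact h.symm
  · exact Filter.Tendsto.const_mul_atTop (by positivity) tendsto_natCast_atTop_atTop
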